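/- Fix a round of d^α-sampling with distances d_1 ≥ ... ≥ d_n > 0 and partial sums D_i(α) = Σ_{j=1}^i d_j^α. For z drawn uniformly from [0,1] and parameters 0 < α_ℓ < α_{ℓ+1}, let x(z) be the minimal index with D_x(α_ℓ)/D_n(α_ℓ) > z and y(z) the minimal index with D_y(α_{ℓ+1})/D_n(α_{ℓ+1}) > z. Then E_z[x(z) − y(z)] ≤ 4 n ln(n) (ln α_{ℓ+1} − ln α_ℓ). -/

import Mathlib

open Finset MeasureTheory

private lemma step_mono (c : ℝ) : Monotone (fun z : ℝ => if c ≤ z then (1:ℝ) else 0) := by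
  intro a b hab
  by_cases h : c ≤ a
  · simp [h, h.trans hab]
  · by_cases h' : c ≤ b <;> simp [h, h']

private lemma ae_ne_real (c : ℝ) : ∀ᵐ z : ℝ, z ≠ c := by
  rw [MeasureTheory.ae_iff]
  simp only [ne_eq, not_not, Set.setOf_eq_eq_singleton]
  exact Real.volume_singleton

private lemma step_integral {c : ℝ} (h0 : 0 ≤ c) (h1 : c ≤ 1) :
    ∫ z in (0:ℝ)..1, (if c ≤ z then (1:ℝ) else 0) = 1 - c := by
  have hint1 : IntervalIntegrable (fun z : ℝ => if c ≤ z then (1:ℝ) else 0) volume 0 c :=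
    (step_mono c).intervalIntegrable
  have hint2 : IntervalIntegrable (fun z : ℝ => if c ≤ z then (1:ℝ) else 0) volume c 1 :=
    (step_mono c).intervalIntegrable
  rw [← intervalIntegral.integral_add_adjacent_intervals hint1 hint2]
  have e1 : (∫ z in (0:ℝ)..c, (if c ≤ z then (1:ℝ) else 0)) = 0 := by
    have : (∫ z in (0:ℝ)..c, (if c ≤ z then (1:ℝ) else 0)) = ∫ _ in (0:ℝ)..c, (0:ℝ) := by
      apply intervalIntegral.integral_congr_ae
      filter_upwards [ae_ne_real c] with z hz hmem
      rw [Set.uIoc_of_le h0] at hmem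
      have : ¬ c ≤ z := by
        rcases lt_or_eq_of_le hmem.2 with h | h
        · exact not_le.mpr h
        · exact absurd h hz
      simp [this]
    rw [this]; simp
  have e2 : (∫ z in c..(1:ℝ), (if c ≤ z then (1:ℝ) else 0)) = 1 - c := by
    have : (∫ z in c..(1:ℝ), (if c ≤ z then (1:ℝ) else 0)) = ∫ _ in c..(1:ℝ), (1:ℝ) := by
      apply intervalIntegral.integral_congr
      intro z hz
      rw [Set.uIcc_of_le h1] at hz
      simp [hz.1]
    rw [this]; simp
  rw [e1, e2]; ring

private lemma count_eq {n m : ℕ} {F : ℕ → ℝ} {z : ℝ}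
    (hmono : ∀ a b, a ≤ b → b ≤ n → F a ≤ F b) (hFn : F n = 1) (hz1 : z < 1)
    (h1 : z < F m) (h2 : ∀ i < m, F i ≤ z) :
    (m : ℝ) = ∑ i ∈ Finset.range n, (if F i ≤ z then (1:ℝ) else 0) := by
  have hmn : m ≤ n := by
    by_contra h
    push_neg at h
    exact absurd (h2 n h) (by rw [hFn]; exact not_le.mpr hz1)
  have key : ∀ i < n, (F i ≤ z ↔ i < m) := by
    intro i hin
    constructor
    · intro hFi
      by_contra h
      push_neg at h
      exact absurd (le_trans (hmono m i h hin.le) hFi) (not_le.mpr h1)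
    · exact h2 i
  have hcongr : ∀ i ∈ Finset.range n, (if F i ≤ z then (1:ℝ) else 0)
      = (if i < m then (1:ℝ) else 0) := by
    intro i hi
    simp only [key i (Finset.mem_range.mp hi)]
  rw [Finset.sum_congr rfl hcongr, Finset.sum_boole]
  have : (Finset.range n).filter (fun i => i < m) = Finset.range m := by
    ext a
    simp only [Finset.mem_filter, Finset.mem_range]
    omega
  rw [this, Finset.card_range]

private lemma tangent_log {x : ℝ} {n : ℕ} (hx : 0 < x) (hn : 0 < n) :
    Real.log x ≤ x / n + (Real.log n - 1) := by
  have hn' : (0:ℝ) < n := by exact_mod_cast hn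
  have h := Real.log_le_sub_one_of_pos (div_pos hx hn')
  rw [Real.log_div (ne_of_gt hx) (ne_of_gt hn')] at h
  linarith

private lemma core_ineq {n i : ℕ} (hn : 2 ≤ n) (hi : i ≤ n) {w : ℕ → ℝ}
    (hw : ∀ j, j < n → 0 < w j) :
    ∑ j ∈ Finset.range i, ∑ k ∈ Finset.Ico i n,
        w j * w k * (Real.log (w j) - Real.log (w k))
      ≤ 2 * Real.log n * (∑ j ∈ Finset.range n, w j)^2 := by
  set A := ∑ j ∈ Finset.range n, w j with hAdef
  have hA : 0 < A := Finset.sum_pos (fun j hj => hw j (Finset.mem_range.mp hj))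
    ⟨0, Finset.mem_range.mpr (by omega)⟩
  set B := ∑ j ∈ Finset.range i, w j with hBdef
  set C := ∑ k ∈ Finset.Ico i n, w k with hCdef
  set U := ∑ j ∈ Finset.range i, w j * Real.log (w j / A) with hUdef
  set V := ∑ k ∈ Finset.Ico i n, w k * (Real.log A - Real.log (w k)) with hVdef
  have hwB : ∀ j ∈ Finset.range i, 0 < w j := fun j hj =>
    hw j (lt_of_lt_of_le (Finset.mem_range.mp hj) hi)
  have hwC : ∀ k ∈ Finset.Ico i n, 0 < w k := fun k hk =>
    hw k (Finset.mem_Ico.mp hk).2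
  have hB0 : 0 ≤ B := Finset.sum_nonneg fun j hj => (hwB j hj).le
  have hC0 : 0 ≤ C := Finset.sum_nonneg fun k hk => (hwC k hk).le
  have hBC : B + C = A := Finset.sum_range_add_sum_Ico w hi
  have hBA : B ≤ A := by linarith
  have hCA : C ≤ A := by linarith
  have hle : ∀ j, j < n → w j ≤ A :=
    fun j hj => Finset.single_le_sum (fun k hk => (hw k (Finset.mem_range.mp hk)).le)
      (Finset.mem_range.mpr hj)
  have expand : ∑ j ∈ Finset.range i, ∑ k ∈ Finset.Ico i n,
      w j * w k * (Real.log (w j) - Real.log (w k)) = U * C + B * V := by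
    have hterm : ∀ j ∈ Finset.range i, ∀ k ∈ Finset.Ico i n,
        w j * w k * (Real.log (w j) - Real.log (w k))
        = (w j * Real.log (w j / A)) * w k + w j * (w k * (Real.log A - Real.log (w k))) := by
      intro j hj k _
      rw [Real.log_div (ne_of_gt (hwB j hj)) (ne_of_gt hA)]
      ring
    calc ∑ j ∈ Finset.range i, ∑ k ∈ Finset.Ico i n,
          w j * w k * (Real.log (w j) - Real.log (w k))
        = ∑ j ∈ Finset.range i, ∑ k ∈ Finset.Ico i n,
            ((w j * Real.log (w j / A)) * w k
              + w j * (w k * (Real.log A - Real.log (w k)))) :=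
          Finset.sum_congr rfl fun j hj => Finset.sum_congr rfl fun k hk => hterm j hj k hk
      _ = ∑ j ∈ Finset.range i,
            ((w j * Real.log (w j / A)) * C + w j * V) := by
          refine Finset.sum_congr rfl fun j _ => ?_
          rw [Finset.sum_add_distrib, ← Finset.mul_sum, ← Finset.mul_sum]
      _ = U * C + B * V := by
          rw [Finset.sum_add_distrib, ← Finset.sum_mul, ← Finset.sum_mul]
  have hU : U ≤ 0 := by
    apply Finset.sum_nonpos
    intro j hj
    have hj' : j < n := lt_of_lt_of_le (Finset.mem_range.mp hj) hi
    have : Real.log (w j / A) ≤ 0 := by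
      apply Real.log_nonpos
      · exact div_nonneg (hwB j hj).le hA.le
      · rw [div_le_one hA]; exact hle j hj'
    exact mul_nonpos_of_nonneg_of_nonpos (hwB j hj).le this
  have hV : V ≤ A + C * (Real.log n - 1) := by
    have hstep : ∀ k ∈ Finset.Ico i n,
        w k * (Real.log A - Real.log (w k)) ≤ A / n + w k * (Real.log n - 1) := by
      intro k hk
      have hwk := hwC k hk
      have h1 : Real.log A - Real.log (w k) = Real.log (A / w k) :=
        (Real.log_div (ne_of_gt hA) (ne_of_gt hwk)).symm
      have h2 : Real.log (A / w k) ≤ (A / w k) / n + (Real.log n - 1) :=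
        tangent_log (by positivity) (by omega)
      calc w k * (Real.log A - Real.log (w k)) = w k * Real.log (A / w k) := by rw [h1]
        _ ≤ w k * ((A / w k) / n + (Real.log n - 1)) :=
            mul_le_mul_of_nonneg_left h2 hwk.le
        _ = A / n + w k * (Real.log n - 1) := by
            rw [mul_add]
            congr 1
            have hn' : (n:ℝ) ≠ 0 := by positivity
            field_simp
    calc V ≤ ∑ k ∈ Finset.Ico i n, (A / n + w k * (Real.log n - 1)) :=
          Finset.sum_le_sum hstep
      _ = (Finset.Ico i n).card * (A / n) + C * (Real.log n - 1) := by
          rw [Finset.sum_add_distrib, Finset.sum_const, ← Finset.sum_mul]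
          simp [nsmul_eq_mul, hCdef]
      _ ≤ A + C * (Real.log n - 1) := by
          have hcard : ((Finset.Ico i n).card : ℝ) ≤ n := by
            rw [Nat.card_Ico]
            exact_mod_cast Nat.sub_le n i
          have hn0 : (0:ℝ) < n := by exact_mod_cast (by omega : 0 < n)
          have : ((Finset.Ico i n).card : ℝ) * (A / n) ≤ n * (A / n) :=
            mul_le_mul_of_nonneg_right hcard (by positivity)
          have hAn : (n:ℝ) * (A / n) = A := by field_simp
          linarith
  have hL2 : Real.log 2 ≤ Real.log n := by
    apply Real.log_le_log (by norm_num)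
    exact_mod_cast hn
  have hhalf : (1:ℝ)/2 < Real.log 2 := by
    have := Real.log_two_gt_d9
    linarith
  have hLnn : 0 ≤ Real.log n := le_trans (by linarith) hL2
  have h1 : U * C ≤ 0 := mul_nonpos_of_nonpos_of_nonneg hU hC0
  have h2 : B * V ≤ B * (A + C * (Real.log n - 1)) :=
    mul_le_mul_of_nonneg_left hV hB0
  rw [expand]
  by_cases hcase : 1 ≤ Real.log n
  · nlinarith [mul_le_mul hBA hCA hC0 hA.le, mul_nonneg hB0 hC0,
      mul_le_mul hBA (le_refl A) hA.le hA.le, sq_nonneg A]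
  · push_neg at hcase
    have hCL : C * (Real.log n - 1) ≤ 0 :=
      mul_nonpos_of_nonneg_of_nonpos hC0 (by linarith)
    nlinarith [mul_le_mul hBA (le_refl A) hA.le hA.le, sq_nonneg A, mul_pos hA hA]

private lemma num_eq {n i : ℕ} (hi : i ≤ n) (w L : ℕ → ℝ) :
    (∑ j ∈ Finset.range i, w j * L j) * (∑ j ∈ Finset.range n, w j)
      - (∑ j ∈ Finset.range i, w j) * (∑ j ∈ Finset.range n, w j * L j)
    = ∑ j ∈ Finset.range i, ∑ k ∈ Finset.Ico i n, w j * w k * (L j - L k) := by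
  rw [← Finset.sum_range_add_sum_Ico w hi,
    ← Finset.sum_range_add_sum_Ico (fun j => w j * L j) hi]
  have h : ∀ j ∈ Finset.range i, ∑ k ∈ Finset.Ico i n, w j * w k * (L j - L k)
      = (w j * L j) * (∑ k ∈ Finset.Ico i n, w k)
        - w j * (∑ k ∈ Finset.Ico i n, w k * L k) := by
    intro j _
    rw [Finset.mul_sum, Finset.mul_sum, ← Finset.sum_sub_distrib]
    exact Finset.sum_congr rfl fun k _ => by ring
  rw [Finset.sum_congr rfl h, Finset.sum_sub_distrib, ← Finset.sum_mul, ← Finset.sum_mul]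
  ring

private lemma ratio_hasDerivAt {n i : ℕ} {d : ℕ → ℝ} (hpos : ∀ j, j < n → 0 < d j)
    (hn : 0 < n) (hi : i ≤ n) (t : ℝ) :
    HasDerivAt (fun t => (∑ j ∈ Finset.range i, d j ^ Real.exp t)
        / (∑ j ∈ Finset.range n, d j ^ Real.exp t))
      (((∑ j ∈ Finset.range i, d j ^ Real.exp t * Real.log (d j ^ Real.exp t))
          * (∑ j ∈ Finset.range n, d j ^ Real.exp t)
        - (∑ j ∈ Finset.range i, d j ^ Real.exp t)
          * (∑ j ∈ Finset.range n, d j ^ Real.exp t * Real.log (d j ^ Real.exp t)))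
        / (∑ j ∈ Finset.range n, d j ^ Real.exp t)^2) t := by
  have hterm : ∀ j, j < n → HasDerivAt (fun t : ℝ => d j ^ Real.exp t)
      (d j ^ Real.exp t * Real.log (d j ^ Real.exp t)) t := by
    intro j hj
    have h1 : HasDerivAt (fun x : ℝ => d j ^ x)
        (d j ^ Real.exp t * Real.log (d j)) (Real.exp t) :=
      (Real.hasStrictDerivAt_const_rpow (hpos j hj) (Real.exp t)).hasDerivAt
    have h2 := h1.comp t (Real.hasDerivAt_exp t)
    refine h2.congr_deriv ?_
    rw [Real.log_rpow (hpos j hj)]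
    ring
  have hB : HasDerivAt (fun t : ℝ => ∑ j ∈ Finset.range i, d j ^ Real.exp t)
      (∑ j ∈ Finset.range i, d j ^ Real.exp t * Real.log (d j ^ Real.exp t)) t :=
    HasDerivAt.fun_sum fun j hj =>
      hterm j (lt_of_lt_of_le (Finset.mem_range.mp hj) hi)
  have hA : HasDerivAt (fun t : ℝ => ∑ j ∈ Finset.range n, d j ^ Real.exp t)
      (∑ j ∈ Finset.range n, d j ^ Real.exp t * Real.log (d j ^ Real.exp t)) t :=
    HasDerivAt.fun_sum fun j hj => hterm j (Finset.mem_range.mp hj)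
  have hAne : (∑ j ∈ Finset.range n, d j ^ Real.exp t) ≠ 0 := by
    apply ne_of_gt
    apply Finset.sum_pos (fun j hj => Real.rpow_pos_of_pos (hpos j (Finset.mem_range.mp hj)) _)
    exact ⟨0, Finset.mem_range.mpr hn⟩
  exact hB.div hA hAne

private lemma diff_bound {n i : ℕ} (hn : 2 ≤ n) (hi : i ≤ n) {d : ℕ → ℝ}
    (hpos : ∀ j, j < n → 0 < d j)
    (hsorted : ∀ j k, j ≤ k → k < n → d k ≤ d j)
    {αl αh : ℝ} (h0 : 0 < αl) (hlh : αl < αh) :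
    (∑ j ∈ Finset.range i, d j ^ αh) / (∑ j ∈ Finset.range n, d j ^ αh)
      - (∑ j ∈ Finset.range i, d j ^ αl) / (∑ j ∈ Finset.range n, d j ^ αl)
      ≤ 2 * Real.log n * (Real.log αh - Real.log αl) := by
  have h0h : 0 < αh := lt_trans h0 hlh
  set tl := Real.log αl with htl
  set th := Real.log αh with hth
  have htlth : tl < th := Real.log_lt_log h0 hlh
  set g : ℝ → ℝ := fun t => (∑ j ∈ Finset.range i, d j ^ Real.exp t)
      / (∑ j ∈ Finset.range n, d j ^ Real.exp t) with hg
  set g' : ℝ → ℝ := fun t =>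
    (∑ j ∈ Finset.range i, ∑ k ∈ Finset.Ico i n,
        (d j ^ Real.exp t) * (d k ^ Real.exp t)
          * (Real.log (d j ^ Real.exp t) - Real.log (d k ^ Real.exp t)))
      / (∑ j ∈ Finset.range n, d j ^ Real.exp t)^2 with hg'
  have hderiv : ∀ t : ℝ, HasDerivAt g (g' t) t := by
    intro t
    have h1 := ratio_hasDerivAt hpos (by omega) hi t
    convert h1 using 1
    rw [hg']
    simp only []
    congr 1
    exact (num_eq hi (fun j => d j ^ Real.exp t) (fun j => Real.log (d j ^ Real.exp t))).symm
  have hbound : ∀ t : ℝ, ‖g' t‖ ≤ 2 * Real.log n := by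
    intro t
    have hw : ∀ j, j < n → 0 < d j ^ Real.exp t :=
      fun j hj => Real.rpow_pos_of_pos (hpos j hj) _
    have hA : 0 < ∑ j ∈ Finset.range n, d j ^ Real.exp t :=
      Finset.sum_pos (fun j hj => hw j (Finset.mem_range.mp hj))
        ⟨0, Finset.mem_range.mpr (by omega)⟩
    have hnum0 : 0 ≤ ∑ j ∈ Finset.range i, ∑ k ∈ Finset.Ico i n,
        (d j ^ Real.exp t) * (d k ^ Real.exp t)
          * (Real.log (d j ^ Real.exp t) - Real.log (d k ^ Real.exp t)) := by
      apply Finset.sum_nonneg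
      intro j hj
      apply Finset.sum_nonneg
      intro k hk
      have hjk : j ≤ k := le_trans (Nat.le_of_lt_succ
        (Nat.lt_succ_of_lt (Finset.mem_range.mp hj))) (Finset.mem_Ico.mp hk).1
      have hkn : k < n := (Finset.mem_Ico.mp hk).2
      have hjn : j < n := lt_of_le_of_lt hjk hkn
      have hdd : d k ≤ d j := hsorted j k hjk hkn
      have hww : d k ^ Real.exp t ≤ d j ^ Real.exp t :=
        Real.rpow_le_rpow (hpos k hkn).le hdd (Real.exp_pos t).le
      have : Real.log (d k ^ Real.exp t) ≤ Real.log (d j ^ Real.exp t) :=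
        Real.log_le_log (hw k hkn) hww
      have h1 : 0 ≤ (d j ^ Real.exp t) * (d k ^ Real.exp t) :=
        mul_nonneg (hw j hjn).le (hw k hkn).le
      nlinarith
    have hnum1 := core_ineq hn hi hw
    have hLnn : (0:ℝ) ≤ 2 * Real.log n := by
      have : (0:ℝ) ≤ Real.log n := Real.log_nonneg (by exact_mod_cast (by omega : 1 ≤ n))
      linarith
    rw [Real.norm_eq_abs, abs_le]
    constructor
    · have : 0 ≤ g' t := div_nonneg hnum0 (by positivity)
      linarith
    · rw [hg', div_le_iff₀ (by positivity)]
      calc _ ≤ 2 * Real.log n * (∑ j ∈ Finset.range n, d j ^ Real.exp t)^2 := hnum1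
        _ = _ := by ring
  have key := Convex.norm_image_sub_le_of_norm_hasDerivWithin_le
    (f := g) (f' := g') (s := Set.Icc tl th) (C := 2 * Real.log n)
    (fun t _ => (hderiv t).hasDerivWithinAt)
    (fun t _ => hbound t) (convex_Icc tl th)
    ⟨le_refl tl, htlth.le⟩ ⟨htlth.le, le_refl th⟩
  have hgl : g tl = (∑ j ∈ Finset.range i, d j ^ αl) / (∑ j ∈ Finset.range n, d j ^ αl) := by
    rw [hg]; simp only [htl, Real.exp_log h0]
  have hgh : g th = (∑ j ∈ Finset.range i, d j ^ αh) / (∑ j ∈ Finset.range n, d j ^ αh) := by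
    rw [hg]; simp only [hth, Real.exp_log h0h]
  rw [hgl, hgh] at key
  rw [Real.norm_eq_abs, Real.norm_eq_abs, abs_of_pos (by linarith : (0:ℝ) < th - tl)] at key
  calc _ ≤ |(∑ j ∈ Finset.range i, d j ^ αh) / (∑ j ∈ Finset.range n, d j ^ αh)
      - (∑ j ∈ Finset.range i, d j ^ αl) / (∑ j ∈ Finset.range n, d j ^ αl)| := le_abs_self _
    _ ≤ 2 * Real.log n * (th - tl) := key
    _ = 2 * Real.log n * (Real.log αh - Real.log αl) := by rw [htl, hth]

/-- Expected number of breakpoints in one round of `d^α`-sampling over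
`[α_ℓ, α_h]`: if `x z` (resp. `y z`) is the minimal index with
`D_{x}(α_ℓ)/D_n(α_ℓ) > z` (resp. `D_y(α_h)/D_n(α_h) > z`), then
`E_z[x(z) − y(z)] ≤ 4 n ln(n) (ln α_h − ln α_ℓ)`. -/
theorem stmt15 (n : ℕ) (hn : 2 ≤ n) (d : ℕ → ℝ)
    (hpos : ∀ j, j < n → 0 < d j)
    (hsorted : ∀ j k, j ≤ k → k < n → d k ≤ d j)
    (αl αh : ℝ) (h0 : 0 < αl) (hlh : αl < αh)
    (x y : ℝ → ℕ)
    (hx : ∀ z ∈ Set.Ico (0:ℝ) 1,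
      z < (∑ j ∈ Finset.range (x z), d j ^ αl) / (∑ j ∈ Finset.range n, d j ^ αl) ∧
      ∀ i < x z,
        (∑ j ∈ Finset.range i, d j ^ αl) / (∑ j ∈ Finset.range n, d j ^ αl) ≤ z)
    (hy : ∀ z ∈ Set.Ico (0:ℝ) 1,
      z < (∑ j ∈ Finset.range (y z), d j ^ αh) / (∑ j ∈ Finset.range n, d j ^ αh) ∧
      ∀ i < y z,
        (∑ j ∈ Finset.range i, d j ^ αh) / (∑ j ∈ Finset.range n, d j ^ αh) ≤ z) :
    ∫ z in (0:ℝ)..1, ((x z : ℝ) - (y z : ℝ))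
      ≤ 4 * n * Real.log n * (Real.log αh - Real.log αl) := by
  have h0h : 0 < αh := lt_trans h0 hlh
  set Fl : ℕ → ℝ := fun i => (∑ j ∈ Finset.range i, d j ^ αl)
    / (∑ j ∈ Finset.range n, d j ^ αl) with hFl
  set Fh : ℕ → ℝ := fun i => (∑ j ∈ Finset.range i, d j ^ αh)
    / (∑ j ∈ Finset.range n, d j ^ αh) with hFh
  have hAl : 0 < ∑ j ∈ Finset.range n, d j ^ αl :=
    Finset.sum_pos (fun j hj => Real.rpow_pos_of_pos (hpos j (Finset.mem_range.mp hj)) _)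
      ⟨0, Finset.mem_range.mpr (by omega)⟩
  have hAh : 0 < ∑ j ∈ Finset.range n, d j ^ αh :=
    Finset.sum_pos (fun j hj => Real.rpow_pos_of_pos (hpos j (Finset.mem_range.mp hj)) _)
      ⟨0, Finset.mem_range.mpr (by omega)⟩
  have hmono : ∀ (α : ℝ), ∀ a b, a ≤ b → b ≤ n →
      (∑ j ∈ Finset.range a, d j ^ α) ≤ ∑ j ∈ Finset.range b, d j ^ α := by
    intro α a b hab hbn
    apply Finset.sum_le_sum_of_subset_of_nonneg (Finset.range_subset_range.mpr hab)
    intro j hj _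
    exact (Real.rpow_pos_of_pos (hpos j (lt_of_lt_of_le (Finset.mem_range.mp hj) hbn)) _).le
  have hFlmono : ∀ a b, a ≤ b → b ≤ n → Fl a ≤ Fl b := fun a b hab hbn =>
    div_le_div_of_nonneg_right (hmono αl a b hab hbn) hAl.le
  have hFhmono : ∀ a b, a ≤ b → b ≤ n → Fh a ≤ Fh b := fun a b hab hbn =>
    div_le_div_of_nonneg_right (hmono αh a b hab hbn) hAh.le
  have hFln : Fl n = 1 := div_self (ne_of_gt hAl)
  have hFhn : Fh n = 1 := div_self (ne_of_gt hAh)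
  have hFl01 : ∀ i ≤ n, 0 ≤ Fl i ∧ Fl i ≤ 1 := by
    intro i hi
    constructor
    · apply div_nonneg _ hAl.le
      apply Finset.sum_nonneg
      intro j hj
      exact (Real.rpow_pos_of_pos (hpos j (lt_of_lt_of_le (Finset.mem_range.mp hj) hi)) _).le
    · rw [← hFln]; exact hFlmono i n hi le_rfl
  have hFh01 : ∀ i ≤ n, 0 ≤ Fh i ∧ Fh i ≤ 1 := by
    intro i hi
    constructor
    · apply div_nonneg _ hAh.le
      apply Finset.sum_nonneg
      intro j hj
      exact (Real.rpow_pos_of_pos (hpos j (lt_of_lt_of_le (Finset.mem_range.mp hj) hi)) _).le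
    · rw [← hFhn]; exact hFhmono i n hi le_rfl
  have hcongr : (∫ z in (0:ℝ)..1, ((x z : ℝ) - (y z : ℝ)))
      = ∫ z in (0:ℝ)..1, ∑ i ∈ Finset.range n,
          ((if Fl i ≤ z then (1:ℝ) else 0) - (if Fh i ≤ z then (1:ℝ) else 0)) := by
    apply intervalIntegral.integral_congr_ae
    filter_upwards [ae_ne_real 1] with z hz hmem
    rw [Set.uIoc_of_le (by norm_num : (0:ℝ) ≤ 1)] at hmem
    have hz01 : z ∈ Set.Ico (0:ℝ) 1 := ⟨hmem.1.le, lt_of_le_of_ne hmem.2 hz⟩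
    obtain ⟨hx1, hx2⟩ := hx z hz01
    obtain ⟨hy1, hy2⟩ := hy z hz01
    rw [Finset.sum_sub_distrib]
    rw [← count_eq hFlmono hFln hz01.2 hx1 hx2, ← count_eq hFhmono hFhn hz01.2 hy1 hy2]
  rw [hcongr]
  have hint : ∀ i ∈ Finset.range n, IntervalIntegrable (fun z : ℝ =>
      (if Fl i ≤ z then (1:ℝ) else 0) - (if Fh i ≤ z then (1:ℝ) else 0)) volume 0 1 :=
    fun i _ => ((step_mono (Fl i)).intervalIntegrable).sub ((step_mono (Fh i)).intervalIntegrable)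
  rw [intervalIntegral.integral_finset_sum hint]
  have heval : ∀ i ∈ Finset.range n,
      (∫ z in (0:ℝ)..1, ((if Fl i ≤ z then (1:ℝ) else 0) - (if Fh i ≤ z then (1:ℝ) else 0)))
        = Fh i - Fl i := by
    intro i hi
    have hin : i ≤ n := (Finset.mem_range.mp hi).le
    rw [intervalIntegral.integral_sub ((step_mono (Fl i)).intervalIntegrable)
      ((step_mono (Fh i)).intervalIntegrable),
      step_integral (hFl01 i hin).1 (hFl01 i hin).2,
      step_integral (hFh01 i hin).1 (hFh01 i hin).2]
    ring
  rw [Finset.sum_congr rfl heval]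
  have hΔ : 0 ≤ Real.log αh - Real.log αl :=
    sub_nonneg.mpr (Real.log_le_log h0 hlh.le)
  have hlogn : 0 ≤ Real.log n :=
    Real.log_nonneg (by exact_mod_cast (by omega : 1 ≤ n))
  calc ∑ i ∈ Finset.range n, (Fh i - Fl i)
      ≤ ∑ _i ∈ Finset.range n, 2 * Real.log n * (Real.log αh - Real.log αl) := by
        apply Finset.sum_le_sum
        intro i hi
        exact diff_bound hn (Finset.mem_range.mp hi).le hpos hsorted h0 hlh
    _ = n * (2 * Real.log n * (Real.log αh - Real.log αl)) := by
        rw [Finset.sum_const, Finset.card_range, nsmul_eq_mul]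
    _ ≤ 4 * n * Real.log n * (Real.log αh - Real.log αl) := by
        have hn0 : (0:ℝ) ≤ n := by positivity
        nlinarith [mul_nonneg hlogn hΔ, mul_nonneg hn0 (mul_nonneg hlogn hΔ)]
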